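/- Let G = (V, E) be a finite graph with internal vertices V_int, and fix a subset ℒ ⊆ E. Define the resilience function res_ℒ(p) = Σ_{ℓ=1}^∞ C(ℓ, ⌈ℓ/2⌉) · |{ℛ ∈ Z_∘(G) ∪ Z_ext(G) : |ℛ| = ℓ and |ℛ ∩ ℒ| is odd}| · p^{⌈ℓ/2⌉}, where Z_∘(G) is the set of simple closed loops and Z_ext(G) is the set of simple paths connecting two distinct external vertices through internal vertices. If ℰ ~ 𝒩(p) is a local stochastic random subset of E, and MinMatch(∂ℰ) is any minimum matching of ∂ℰ, then Pr[|( ℰ Δ MinMatch(∂ℰ) ) ∩ ℒ| is odd] ≤ res_ℒ(p). -/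

import Mathlib

open Finset

variable {V : Type*} [Fintype V] [DecidableEq V]

/-- The boundary of a set of edges: the internal vertices incident to an odd number of edges. -/
def gBoundary (Vint : Finset V) (ℰ : Finset (Sym2 V)) : Finset V :=
  Vint.filter (fun v => Odd (ℰ.filter (fun e => v ∈ e)).card)

/-- `Z` is the edge set of a simple closed loop of `G`. -/
def IsSimpleClosedLoop (G : SimpleGraph V) (Z : Finset (Sym2 V)) : Prop :=
  ∃ (u : V) (w : G.Walk u u), w.IsCycle ∧ Z = w.edges.toFinset

/-- `Z` is the edge set of a simple path connecting two distinct external vertices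
through internal vertices. -/
def IsExtPath (G : SimpleGraph V) (Vint : Finset V) (Z : Finset (Sym2 V)) : Prop :=
  ∃ (u v : V) (w : G.Walk u v), u ≠ v ∧ u ∉ Vint ∧ v ∉ Vint ∧ w.IsPath ∧
    (∀ x ∈ w.support, x ≠ u → x ≠ v → x ∈ Vint) ∧ Z = w.edges.toFinset

/-- The resilience function of a subset ℒ of edges (Definition 4.1 of the paper):
`res_ℒ(p) = Σ_{ℓ≥1} C(ℓ,⌈ℓ/2⌉) · #{ℛ ∈ Z∘(G) ∪ Z_ext(G) : |ℛ| = ℓ, |ℛ ∩ ℒ| odd} · p^⌈ℓ/2⌉`. -/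
noncomputable def res (G : SimpleGraph V) (Vint : Finset V)
    (ℒ : Finset (Sym2 V)) (p : ℝ) : ℝ :=
  ∑' ℓ : ℕ,
    ((ℓ + 1).choose ((ℓ + 2) / 2) : ℝ) *
      (Set.ncard {ℛ : Finset (Sym2 V) |
          (IsSimpleClosedLoop G ℛ ∨ IsExtPath G Vint ℛ) ∧
          ℛ.card = ℓ + 1 ∧ Odd ((ℛ ∩ ℒ).card)} : ℝ) *
      p ^ ((ℓ + 2) / 2)

open symmDiff

set_option linter.unusedSectionVars false
set_option linter.unusedVariables false

lemma card_symmDiff_aux (s t : Finset (Sym2 V)) :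
    (s ∆ t).card + 2 * (s ∩ t).card = s.card + t.card := by
  rw [symmDiff_def, sup_eq_union,
    Finset.card_union_of_disjoint disjoint_sdiff_sdiff]
  have h1 := Finset.card_sdiff_add_card_inter s t
  have h2 := Finset.card_sdiff_add_card_inter t s
  rw [Finset.inter_comm] at h2
  omega

lemma odd_card_symmDiff_iff (s t : Finset (Sym2 V)) :
    Odd ((s ∆ t).card) ↔ ¬ (Odd s.card ↔ Odd t.card) := by
  have := card_symmDiff_aux s t
  rw [Nat.odd_iff, Nat.odd_iff, Nat.odd_iff]
  omega

lemma filter_symmDiff_mem (v : V) (A B : Finset (Sym2 V)) :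
    (A ∆ B).filter (fun e => v ∈ e) =
      (A.filter (fun e => v ∈ e)) ∆ (B.filter (fun e => v ∈ e)) := by
  ext e
  simp only [Finset.mem_filter, Finset.mem_symmDiff]
  tauto

lemma gBoundary_symmDiff (Vint : Finset V) (A B : Finset (Sym2 V)) :
    gBoundary Vint (A ∆ B) = (gBoundary Vint A) ∆ (gBoundary Vint B) := by
  ext v
  simp only [gBoundary, Finset.mem_symmDiff, Finset.mem_filter, filter_symmDiff_mem,
    odd_card_symmDiff_iff]
  tauto

lemma trail_filter_card {G : SimpleGraph V} {u v : V} {w : G.Walk u v} (ht : w.IsTrail)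
    (x : V) : (w.edges.toFinset.filter (fun e => x ∈ e)).card
      = w.edges.countP (fun e => decide (x ∈ e)) := by
  have heq : w.edges.toFinset.filter (fun e => x ∈ e)
      = (w.edges.filter (fun e => decide (x ∈ e))).toFinset := by
    ext e; simp
  rw [heq, List.card_toFinset, (ht.edges_nodup.filter _).dedup,
    List.countP_eq_length_filter]

lemma ne_of_isPath_pos {G : SimpleGraph V} {u v : V} {w : G.Walk u v} (h : w.IsPath)
    (hl : 1 ≤ w.length) : u ≠ v := by
  rintro rfl
  have := SimpleGraph.Path.loop_eq ⟨w, h⟩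
  simp only [SimpleGraph.Path.nil] at this
  rw [Subtype.ext_iff] at this
  simp only at this
  subst this
  simp at hl

lemma gBoundary_loop {G : SimpleGraph V} {Vint : Finset V} {Z : Finset (Sym2 V)}
    (h : IsSimpleClosedLoop G Z) : gBoundary Vint Z = ∅ := by
  obtain ⟨u, w, hc, rfl⟩ := h
  ext x
  simp only [gBoundary, Finset.mem_filter, Finset.notMem_empty, iff_false, not_and]
  intro _
  rw [trail_filter_card hc.isTrail, Nat.not_odd_iff_even,
    hc.isTrail.even_countP_edges_iff]
  simp

lemma gBoundary_extPath {G : SimpleGraph V} {Vint : Finset V} {Z : Finset (Sym2 V)}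
    (h : IsExtPath G Vint Z) : gBoundary Vint Z = ∅ := by
  obtain ⟨u, v, w, huv, hu, hv, hp, _, rfl⟩ := h
  ext x
  simp only [gBoundary, Finset.mem_filter, Finset.notMem_empty, iff_false, not_and]
  intro hx
  rw [trail_filter_card hp.isTrail, Nat.not_odd_iff_even,
    hp.isTrail.even_countP_edges_iff]
  intro _
  constructor
  · rintro rfl; exact hu hx
  · rintro rfl; exact hv hx

lemma loop_or_ext_subset {G : SimpleGraph V} [DecidableRel G.Adj] {Vint : Finset V} {Z : Finset (Sym2 V)}
    (h : IsSimpleClosedLoop G Z ∨ IsExtPath G Vint Z) : Z ⊆ G.edgeFinset := by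
  obtain (⟨u, w, hc, rfl⟩ | ⟨u, v, w, _, _, _, _, _, rfl⟩) := h <;>
    · intro e he
      rw [List.mem_toFinset] at he
      exact SimpleGraph.mem_edgeFinset.mpr (w.edges_subset_edgeSet he)

lemma loop_or_ext_nonempty {G : SimpleGraph V} {Vint : Finset V} {Z : Finset (Sym2 V)}
    (h : IsSimpleClosedLoop G Z ∨ IsExtPath G Vint Z) : Z.Nonempty := by
  obtain (⟨u, w, hc, rfl⟩ | ⟨u, v, w, huv, _, _, _, _, rfl⟩) := h
  · have h3 := hc.three_le_length
    have : w.edges ≠ [] := by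
      intro h0
      have := w.length_edges
      rw [h0] at this
      simp at this
      omega
    obtain ⟨e, he⟩ := List.exists_mem_of_ne_nil _ this
    exact ⟨e, List.mem_toFinset.mpr he⟩
  · cases w with
    | nil => exact absurd rfl huv
    | @cons u b _ h p =>
      exact ⟨s(u, b), List.mem_toFinset.mpr (by simp)⟩

/-- Invariant for the growing path. -/
def GoodPath (G : SimpleGraph V) (Vint : Finset V) (D : Finset (Sym2 V))
    {u v : V} (w : G.Walk u v) : Prop :=
  w.IsPath ∧ 1 ≤ w.length ∧ w.edges.toFinset ⊆ D ∧
    (∀ x ∈ w.support, x ≠ u → x ≠ v → x ∈ Vint)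

/-- One growth step at an internal endpoint. -/
lemma step_lemma (G : SimpleGraph V) [DecidableRel G.Adj] (Vint : Finset V)
    (D : Finset (Sym2 V)) (hD : D ⊆ G.edgeFinset) (hb : gBoundary Vint D = ∅)
    {u v : V} (w : G.Walk u v) (hg : GoodPath G Vint D w) (hv : v ∈ Vint) :
    (∃ Z, Z ⊆ D ∧ IsSimpleClosedLoop G Z) ∨
    (∃ (a b : V) (w' : G.Walk a b), GoodPath G Vint D w' ∧
      w'.support.length = w.support.length + 1) := by
  obtain ⟨hp, hl, hsub, hint⟩ := hg
  have huv : u ≠ v := ne_of_isPath_pos hp hl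
  -- the number of edges of D at v is even
  have hevenD : Even ((D.filter (fun e => v ∈ e)).card) := by
    by_contra hodd
    rw [Nat.not_even_iff_odd] at hodd
    have : v ∈ gBoundary Vint D := Finset.mem_filter.mpr ⟨hv, hodd⟩
    rw [hb] at this
    exact absurd this (Finset.notMem_empty v)
  -- the number of edges of w at v is odd
  have hoddw : Odd ((w.edges.toFinset.filter (fun e => v ∈ e)).card) := by
    rw [trail_filter_card hp.isTrail, Nat.odd_iff, ← Nat.not_even_iff,
      hp.isTrail.even_countP_edges_iff]
    simp [huv]
  -- find an edge of D at v not in w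
  have hsubf : w.edges.toFinset.filter (fun e => v ∈ e) ⊆ D.filter (fun e => v ∈ e) :=
    Finset.filter_subset_filter _ hsub
  have hex : ∃ e ∈ D.filter (fun e => v ∈ e), e ∉ w.edges.toFinset.filter (fun e => v ∈ e) := by
    by_contra hno
    push_neg at hno
    have : D.filter (fun e => v ∈ e) = w.edges.toFinset.filter (fun e => v ∈ e) :=
      Finset.Subset.antisymm hno hsubf
    rw [this] at hevenD
    exact (Nat.not_odd_iff_even.mpr hevenD) hoddw
  obtain ⟨e, heD, henw⟩ := hex
  rw [Finset.mem_filter] at heD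
  obtain ⟨heD, hve⟩ := heD
  obtain ⟨x, rfl⟩ := Sym2.mem_iff_exists.mp hve
  have hadj : G.Adj v x := by
    have := hD heD
    rwa [SimpleGraph.mem_edgeFinset, SimpleGraph.mem_edgeSet] at this
  have henw' : s(v, x) ∉ w.edges := by
    intro hmem
    exact henw (Finset.mem_filter.mpr ⟨List.mem_toFinset.mpr hmem, hve⟩)
  by_cases hx : x ∈ w.support
  · -- close a cycle
    left
    refine ⟨(SimpleGraph.Walk.cons hadj (w.dropUntil x hx)).edges.toFinset, ?_, v, _, ?_, rfl⟩
    · intro e' he'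
      rw [List.mem_toFinset, SimpleGraph.Walk.edges_cons, List.mem_cons] at he'
      rcases he' with he' | he'
      · rwa [he']
      · exact hsub (List.mem_toFinset.mpr (w.edges_dropUntil_subset hx he'))
    · rw [SimpleGraph.Walk.cons_isCycle_iff]
      exact ⟨hp.dropUntil hx, fun hmem => henw' (w.edges_dropUntil_subset hx hmem)⟩
  · -- extend the path
    right
    refine ⟨x, u, SimpleGraph.Walk.cons hadj.symm w.reverse, ⟨?_, ?_, ?_, ?_⟩, ?_⟩
    · rw [SimpleGraph.Walk.cons_isPath_iff]
      exact ⟨hp.reverse, by rwa [SimpleGraph.Walk.support_reverse, List.mem_reverse]⟩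
    · simp
    · intro e' he'
      rw [List.mem_toFinset, SimpleGraph.Walk.edges_cons, SimpleGraph.Walk.edges_reverse,
        List.mem_cons] at he'
      rcases he' with he' | he'
      · rw [he', Sym2.eq_swap]
        exact heD
      · exact hsub (List.mem_toFinset.mpr (List.mem_reverse.mp he'))
    · intro y hy hyx hyu
      rw [SimpleGraph.Walk.support_cons, List.mem_cons] at hy
      rcases hy with rfl | hy
      · exact absurd rfl hyx
      · rw [SimpleGraph.Walk.support_reverse, List.mem_reverse] at hy
        by_cases hyv : y = v
        · rw [hyv]; exact hv
        · exact hint y hy hyu hyv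
    · rw [SimpleGraph.Walk.support_cons, List.length_cons,
        SimpleGraph.Walk.support_reverse, List.length_reverse]

lemma grow_lemma (G : SimpleGraph V) [DecidableRel G.Adj] (Vint : Finset V)
    (D : Finset (Sym2 V)) (hD : D ⊆ G.edgeFinset) (hb : gBoundary Vint D = ∅) :
    ∀ (n : ℕ) (u v : V) (w : G.Walk u v), GoodPath G Vint D w →
      Fintype.card V ≤ w.support.length + n →
      ∃ Z, Z ⊆ D ∧ (IsSimpleClosedLoop G Z ∨ IsExtPath G Vint Z) := by
  intro n
  induction n with
  | zero =>
    intro u v w hg hn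
    -- support already uses all vertices; any growth step must close a cycle
    by_cases hv : v ∈ Vint
    · rcases step_lemma G Vint D hD hb w hg hv with ⟨Z, hZ, hc⟩ | ⟨a, b, w', hg', hlen⟩
      · exact ⟨Z, hZ, Or.inl hc⟩
      · exfalso
        have := hg'.1.support_nodup.length_le_card
        omega
    · by_cases hu : u ∈ Vint
      · have hgr : GoodPath G Vint D w.reverse := by
          obtain ⟨hp, hl, hs, hi⟩ := hg
          refine ⟨hp.reverse, by simpa using hl, ?_, ?_⟩
          · rwa [SimpleGraph.Walk.edges_reverse, List.toFinset_reverse]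
          · intro x hx hxv hxu
            rw [SimpleGraph.Walk.support_reverse, List.mem_reverse] at hx
            exact hi x hx hxu hxv
        rcases step_lemma G Vint D hD hb w.reverse hgr hu with ⟨Z, hZ, hc⟩ | ⟨a, b, w', hg', hlen⟩
        · exact ⟨Z, hZ, Or.inl hc⟩
        · exfalso
          have := hg'.1.support_nodup.length_le_card
          rw [SimpleGraph.Walk.support_reverse, List.length_reverse] at hlen
          omega
      · exact ⟨w.edges.toFinset, hg.2.2.1,
          Or.inr ⟨u, v, w, ne_of_isPath_pos hg.1 hg.2.1, hu, hv, hg.1, hg.2.2.2, rfl⟩⟩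
  | succ n ih =>
    intro u v w hg hn
    by_cases hv : v ∈ Vint
    · rcases step_lemma G Vint D hD hb w hg hv with ⟨Z, hZ, hc⟩ | ⟨a, b, w', hg', hlen⟩
      · exact ⟨Z, hZ, Or.inl hc⟩
      · exact ih a b w' hg' (by omega)
    · by_cases hu : u ∈ Vint
      · have hgr : GoodPath G Vint D w.reverse := by
          obtain ⟨hp, hl, hs, hi⟩ := hg
          refine ⟨hp.reverse, by simpa using hl, ?_, ?_⟩
          · rwa [SimpleGraph.Walk.edges_reverse, List.toFinset_reverse]
          · intro x hx hxv hxu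
            rw [SimpleGraph.Walk.support_reverse, List.mem_reverse] at hx
            exact hi x hx hxu hxv
        rcases step_lemma G Vint D hD hb w.reverse hgr hu with ⟨Z, hZ, hc⟩ | ⟨a, b, w', hg', hlen⟩
        · exact ⟨Z, hZ, Or.inl hc⟩
        · refine ih a b w' hg' ?_
          rw [SimpleGraph.Walk.support_reverse, List.length_reverse] at hlen
          omega
      · exact ⟨w.edges.toFinset, hg.2.2.1,
          Or.inr ⟨u, v, w, ne_of_isPath_pos hg.1 hg.2.1, hu, hv, hg.1, hg.2.2.2, rfl⟩⟩

lemma extract_lemma (G : SimpleGraph V) [DecidableRel G.Adj] (Vint : Finset V)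
    (D : Finset (Sym2 V)) (hD : D ⊆ G.edgeFinset) (hb : gBoundary Vint D = ∅)
    (hne : D.Nonempty) :
    ∃ Z, Z ⊆ D ∧ (IsSimpleClosedLoop G Z ∨ IsExtPath G Vint Z) := by
  obtain ⟨e, he⟩ := hne
  have heE := hD he
  rw [SimpleGraph.mem_edgeFinset] at heE
  -- get an adjacency from the edge
  obtain ⟨a, b⟩ := e
  rw [SimpleGraph.mem_edgeSet] at heE
  have w : G.Walk a b := SimpleGraph.Walk.cons heE SimpleGraph.Walk.nil
  refine grow_lemma G Vint D hD hb (Fintype.card V) a b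
    (SimpleGraph.Walk.cons heE SimpleGraph.Walk.nil) ⟨?_, ?_, ?_, ?_⟩ (by omega)
  · simp only [SimpleGraph.Walk.cons_isPath_iff]
    simp [heE.ne]
  · simp
  · intro e' he'
    simp only [SimpleGraph.Walk.edges_cons, SimpleGraph.Walk.edges_nil,
      List.toFinset_cons, List.toFinset_nil, Finset.mem_insert] at he'
    rcases he' with rfl | he'
    · exact he
    · simp at he'
  · intro x hx hxa hxb
    simp only [SimpleGraph.Walk.support_cons, SimpleGraph.Walk.support_nil,
      List.mem_cons, List.mem_singleton] at hx
    rcases hx with rfl | rfl | h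
    · exact absurd rfl hxa
    · exact absurd rfl hxb
    · simp at h

lemma decompose_lemma (G : SimpleGraph V) [DecidableRel G.Adj] (Vint : Finset V)
    (ℒ : Finset (Sym2 V)) :
    ∀ (N : ℕ) (D : Finset (Sym2 V)), D.card ≤ N → D ⊆ G.edgeFinset →
      gBoundary Vint D = ∅ → Odd ((D ∩ ℒ).card) →
      ∃ Z, Z ⊆ D ∧ (IsSimpleClosedLoop G Z ∨ IsExtPath G Vint Z) ∧ Odd ((Z ∩ ℒ).card) := by
  intro N
  induction N with
  | zero =>
    intro D hcard _ _ hodd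
    have hD0 : D = ∅ := Finset.card_eq_zero.mp (by omega)
    subst hD0
    simp [Nat.odd_iff] at hodd
  | succ N ih =>
    intro D hcard hD hb hodd
    have hne : D.Nonempty := by
      rcases Finset.eq_empty_or_nonempty D with rfl | h
      · simp [Nat.odd_iff] at hodd
      · exact h
    obtain ⟨Z, hZD, hZ⟩ := extract_lemma G Vint D hD hb hne
    by_cases hZodd : Odd ((Z ∩ ℒ).card)
    · exact ⟨Z, hZD, hZ, hZodd⟩
    · have hZne : Z.Nonempty := loop_or_ext_nonempty hZ
      have hZb : gBoundary Vint Z = ∅ := by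
        rcases hZ with h | h
        · exact gBoundary_loop h
        · exact gBoundary_extPath h
      have hDZ : D \ Z = D ∆ Z := by
        rw [symmDiff_def, sup_eq_union, Finset.sdiff_eq_empty_iff_subset.mpr hZD,
          Finset.union_empty]
      have hb' : gBoundary Vint (D \ Z) = ∅ := by
        rw [hDZ, gBoundary_symmDiff, hb, hZb]
        simp
      have hcard' : (D \ Z).card ≤ N := by
        have h1 : (D \ Z).card = D.card - Z.card := Finset.card_sdiff_of_subset hZD
        have h2 : 1 ≤ Z.card := Finset.card_pos.mpr hZne
        have h3 : Z.card ≤ D.card := Finset.card_le_card hZD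
        omega
      have hodd' : Odd (((D \ Z) ∩ ℒ).card) := by
        have hdisj : Disjoint ((D \ Z) ∩ ℒ) (Z ∩ ℒ) :=
          Finset.disjoint_left.mpr (fun e h1 h2 => by
            simp only [Finset.mem_inter, Finset.mem_sdiff] at h1 h2
            exact h1.1.2 h2.1)
        have hun : ((D \ Z) ∩ ℒ) ∪ (Z ∩ ℒ) = D ∩ ℒ := by
          ext e
          simp only [Finset.mem_union, Finset.mem_inter, Finset.mem_sdiff]
          constructor
          · rintro (⟨⟨h1, _⟩, h2⟩ | ⟨h1, h2⟩)
            · exact ⟨h1, h2⟩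
            · exact ⟨hZD h1, h2⟩
          · rintro ⟨h1, h2⟩
            by_cases hz : e ∈ Z
            · exact Or.inr ⟨hz, h2⟩
            · exact Or.inl ⟨⟨h1, hz⟩, h2⟩
        have := Finset.card_union_of_disjoint hdisj
        rw [hun] at this
        rw [Nat.odd_iff] at hodd hZodd ⊢
        omega
      obtain ⟨Z', hZ'D, hZ'⟩ := ih (D \ Z) hcard' (fun e he => hD (Finset.mem_sdiff.mp he).1) hb' hodd'
      exact ⟨Z', hZ'D.trans (Finset.sdiff_subset), hZ'⟩

lemma exists_witness (G : SimpleGraph V) [DecidableRel G.Adj] (Vint : Finset V)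
    (ℒ : Finset (Sym2 V))
    (MM : Finset V → Finset (Sym2 V))
    (hMMsub : ∀ s, MM s ⊆ G.edgeFinset)
    (hMMmatch : ∀ y : Finset (Sym2 V), y ⊆ G.edgeFinset →
      gBoundary Vint (MM (gBoundary Vint y)) = gBoundary Vint y)
    (hMMmin : ∀ y : Finset (Sym2 V), y ⊆ G.edgeFinset →
      ∀ m : Finset (Sym2 V), m ⊆ G.edgeFinset →
        gBoundary Vint m = gBoundary Vint y →
        (MM (gBoundary Vint y)).card ≤ m.card)
    (y : Finset (Sym2 V)) (hy : y ⊆ G.edgeFinset)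
    (hodd : Odd (((y ∆ (MM (gBoundary Vint y))) ∩ ℒ).card)) :
    ∃ Z : Finset (Sym2 V), (IsSimpleClosedLoop G Z ∨ IsExtPath G Vint Z) ∧
      Odd ((Z ∩ ℒ).card) ∧ Z ⊆ G.edgeFinset ∧ (Z.card + 1) / 2 ≤ (Z ∩ y).card := by
  set M := MM (gBoundary Vint y) with hM
  set D := y ∆ M with hDdef
  have hDE : D ⊆ G.edgeFinset := by
    intro e he
    rw [hDdef, Finset.mem_symmDiff] at he
    rcases he with ⟨h1, _⟩ | ⟨h1, _⟩
    · exact hy h1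
    · exact hMMsub _ h1
  have hDb : gBoundary Vint D = ∅ := by
    rw [hDdef, gBoundary_symmDiff, hMMmatch y hy]
    simp
  obtain ⟨Z, hZD, hZpred, hZodd⟩ :=
    decompose_lemma G Vint ℒ D.card D le_rfl hDE hDb hodd
  have hZE : Z ⊆ G.edgeFinset := loop_or_ext_subset hZpred
  have hZb : gBoundary Vint Z = ∅ := by
    rcases hZpred with h | h
    · exact gBoundary_loop h
    · exact gBoundary_extPath h
  -- minimality argument
  have hM'E : M ∆ Z ⊆ G.edgeFinset := by
    intro e he
    rw [Finset.mem_symmDiff] at he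
    rcases he with ⟨h1, _⟩ | ⟨h1, _⟩
    · exact hMMsub _ h1
    · exact hZE h1
  have hM'b : gBoundary Vint (M ∆ Z) = gBoundary Vint y := by
    rw [gBoundary_symmDiff, hZb]
    have he : gBoundary Vint M ∆ (∅ : Finset V) = gBoundary Vint M := by
      ext x; simp [Finset.mem_symmDiff]
    rw [he, hM, hMMmatch y hy]
  have hmin : M.card ≤ (M ∆ Z).card := hMMmin y hy _ hM'E hM'b
  have hsymm := card_symmDiff_aux M Z
  have h2MZ : 2 * (M ∩ Z).card ≤ Z.card := by omega
  -- partition of Z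
  have hpart : (Z ∩ y).card + (Z ∩ M).card = Z.card := by
    rw [← Finset.card_union_of_disjoint]
    · congr 1
      ext e
      simp only [Finset.mem_union, Finset.mem_inter]
      constructor
      · rintro (⟨h1, _⟩ | ⟨h1, _⟩) <;> exact h1
      · intro hz
        have := hZD hz
        rw [hDdef, Finset.mem_symmDiff] at this
        rcases this with ⟨h1, _⟩ | ⟨h1, _⟩
        · exact Or.inl ⟨hz, h1⟩
        · exact Or.inr ⟨hz, h1⟩
    · refine Finset.disjoint_left.mpr (fun e h1 h2 => ?_)
      rw [Finset.mem_inter] at h1 h2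
      have := hZD h1.1
      rw [hDdef, Finset.mem_symmDiff] at this
      rcases this with ⟨_, hnm⟩ | ⟨_, hny⟩
      · exact hnm h2.2
      · exact hny h1.2
  have hZMcomm : (Z ∩ M).card = (M ∩ Z).card := by rw [Finset.inter_comm]
  exact ⟨Z, hZpred, hZodd, hZE, by omega⟩

lemma sum_biUnion_le_nonneg {ι α : Type*} [DecidableEq α] (f : α → ℝ)
    (hf : ∀ a, 0 ≤ f a) (s : Finset ι) (t : ι → Finset α) :
    ∑ x ∈ s.biUnion t, f x ≤ ∑ i ∈ s, ∑ x ∈ t i, f x := by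
  classical
  induction s using Finset.induction with
  | empty => simp
  | @insert a s ha ih =>
    rw [Finset.biUnion_insert, Finset.sum_insert ha]
    have h1 : ∑ x ∈ t a ∪ s.biUnion t, f x ≤ ∑ x ∈ t a, f x + ∑ x ∈ s.biUnion t, f x := by
      have h2 := Finset.sum_union_inter (s₁ := t a) (s₂ := s.biUnion t) (f := f)
      have h3 : 0 ≤ ∑ x ∈ t a ∩ s.biUnion t, f x := Finset.sum_nonneg (fun x _ => hf x)
      linarith
    exact h1.trans (by linarith)

/-- Proposition 4.2: for a local stochastic random subset ℰ of the edges
(with pmf `P`) and any choice `MM` of minimum matchings, the probability that the parity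
of `(ℰ Δ MinMatch(∂ℰ)) ∩ ℒ` is odd is at most `res_ℒ(p)`. -/
theorem stmt4 (G : SimpleGraph V) [DecidableRel G.Adj] (Vint : Finset V)
    (ℒ : Finset (Sym2 V)) (hℒ : ℒ ⊆ G.edgeFinset)
    (p : ℝ) (hp0 : 0 ≤ p) (hp1 : p ≤ 1)
    (P : Finset (Sym2 V) → ℝ) (hP : ∀ y, 0 ≤ P y)
    (hPsum : ∑ y : Finset (Sym2 V), P y = 1)
    (hPsupp : ∀ y, P y ≠ 0 → y ⊆ G.edgeFinset)
    (hls : ∀ F : Finset (Sym2 V),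
      (∑ y ∈ Finset.univ.filter (fun y : Finset (Sym2 V) => F ⊆ y), P y) ≤ p ^ F.card)
    (MM : Finset V → Finset (Sym2 V))
    (hMMsub : ∀ s, MM s ⊆ G.edgeFinset)
    (hMMmatch : ∀ y : Finset (Sym2 V), y ⊆ G.edgeFinset →
      gBoundary Vint (MM (gBoundary Vint y)) = gBoundary Vint y)
    (hMMmin : ∀ y : Finset (Sym2 V), y ⊆ G.edgeFinset →
      ∀ m : Finset (Sym2 V), m ⊆ G.edgeFinset →
        gBoundary Vint m = gBoundary Vint y →
        (MM (gBoundary Vint y)).card ≤ m.card) :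
    (∑ y ∈ Finset.univ.filter
        (fun y : Finset (Sym2 V) =>
          Odd (((symmDiff y (MM (gBoundary Vint y))) ∩ ℒ).card)), P y)
      ≤ res G Vint ℒ p := by
  classical
  set N := G.edgeFinset.card with hN
  set pred : Finset (Sym2 V) → Prop := fun Z =>
    (IsSimpleClosedLoop G Z ∨ IsExtPath G Vint Z) ∧ Odd ((Z ∩ ℒ).card) with hpred
  set 𝒵 : Finset (Finset (Sym2 V)) := G.edgeFinset.powerset.filter pred with h𝒵
  set k : Finset (Sym2 V) → ℕ := fun Z => (Z.card + 1) / 2 with hk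
  set bad : Finset (Finset (Sym2 V)) := Finset.univ.filter
      (fun y : Finset (Sym2 V) =>
        Odd (((symmDiff y (MM (gBoundary Vint y))) ∩ ℒ).card)) with hbad
  -- restrict to the support of P
  have hstep1 : ∑ y ∈ bad, P y = ∑ y ∈ bad.filter (fun y => P y ≠ 0), P y :=
    (Finset.sum_filter_ne_zero bad).symm
  -- the union bound event
  set B : Finset (Finset (Sym2 V)) := 𝒵.biUnion (fun Z =>
    (Finset.powersetCard (k Z) Z).biUnion
      (fun F => Finset.univ.filter (fun y => F ⊆ y))) with hB
  have hsub : bad.filter (fun y => P y ≠ 0) ⊆ B := by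
    intro y hy
    rw [Finset.mem_filter, Finset.mem_filter] at hy
    obtain ⟨⟨_, hyodd⟩, hyne⟩ := hy
    have hyE : y ⊆ G.edgeFinset := hPsupp y hyne
    obtain ⟨Z, hZpred, hZodd, hZE, hZcard⟩ :=
      exists_witness G Vint ℒ MM hMMsub hMMmatch hMMmin y hyE hyodd
    obtain ⟨F, hFsub, hFcard⟩ := Finset.exists_subset_card_eq hZcard
    rw [hB, Finset.mem_biUnion]
    refine ⟨Z, ?_, ?_⟩
    · rw [h𝒵, Finset.mem_filter, Finset.mem_powerset]
      exact ⟨hZE, hZpred, hZodd⟩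
    · rw [Finset.mem_biUnion]
      refine ⟨F, ?_, ?_⟩
      · rw [Finset.mem_powersetCard]
        exact ⟨hFsub.trans (Finset.inter_subset_left), hFcard⟩
      · rw [Finset.mem_filter]
        exact ⟨Finset.mem_univ y, hFsub.trans (Finset.inter_subset_right)⟩
  have hstep2 : ∑ y ∈ bad.filter (fun y => P y ≠ 0), P y ≤ ∑ y ∈ B, P y :=
    Finset.sum_le_sum_of_subset_of_nonneg hsub (fun y _ _ => hP y)
  have hstep3 : ∑ y ∈ B, P y ≤
      ∑ Z ∈ 𝒵, ((Z.card.choose (k Z) : ℝ) * p ^ (k Z)) := by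
    refine (sum_biUnion_le_nonneg P hP _ _).trans ?_
    refine Finset.sum_le_sum (fun Z hZ => ?_)
    calc ∑ x ∈ (Finset.powersetCard (k Z) Z).biUnion
          (fun F => Finset.univ.filter (fun y => F ⊆ y)), P x
        ≤ ∑ F ∈ Finset.powersetCard (k Z) Z,
            ∑ y ∈ Finset.univ.filter (fun y => F ⊆ y), P y :=
          sum_biUnion_le_nonneg P hP _ _
      _ ≤ ∑ F ∈ Finset.powersetCard (k Z) Z, p ^ (k Z) := by
          refine Finset.sum_le_sum (fun F hF => ?_)
          have hFc : F.card = k Z := (Finset.mem_powersetCard.mp hF).2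
          calc ∑ y ∈ Finset.univ.filter (fun y => F ⊆ y), P y ≤ p ^ F.card := hls F
            _ = p ^ (k Z) := by rw [hFc]
      _ = ((Z.card.choose (k Z) : ℝ) * p ^ (k Z)) := by
          rw [Finset.sum_const, Finset.card_powersetCard, nsmul_eq_mul]
  -- regroup by cardinality
  have hmaps : ∀ Z ∈ 𝒵, Z.card - 1 ∈ Finset.range N := by
    intro Z hZ
    rw [h𝒵, Finset.mem_filter, Finset.mem_powerset] at hZ
    have h1 : Z.Nonempty := loop_or_ext_nonempty hZ.2.1
    have h2 : 1 ≤ Z.card := Finset.card_pos.mpr h1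
    have h3 : Z.card ≤ N := Finset.card_le_card hZ.1
    rw [Finset.mem_range]
    omega
  have hstep4 : ∑ Z ∈ 𝒵, ((Z.card.choose (k Z) : ℝ) * p ^ (k Z)) =
      ∑ ℓ ∈ Finset.range N, ∑ Z ∈ 𝒵.filter (fun Z => Z.card - 1 = ℓ),
        ((Z.card.choose (k Z) : ℝ) * p ^ (k Z)) :=
    (Finset.sum_fiberwise_of_maps_to hmaps _).symm
  -- identify each fiber
  have hfiber : ∀ ℓ, ∑ Z ∈ 𝒵.filter (fun Z => Z.card - 1 = ℓ),
      ((Z.card.choose (k Z) : ℝ) * p ^ (k Z)) =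
      (((ℓ + 1).choose ((ℓ + 2) / 2) : ℕ) : ℝ) *
        (Set.ncard {ℛ : Finset (Sym2 V) |
          (IsSimpleClosedLoop G ℛ ∨ IsExtPath G Vint ℛ) ∧
          ℛ.card = ℓ + 1 ∧ Odd ((ℛ ∩ ℒ).card)} : ℝ) *
        p ^ ((ℓ + 2) / 2) := by
    intro ℓ
    have hsetEq : {ℛ : Finset (Sym2 V) |
        (IsSimpleClosedLoop G ℛ ∨ IsExtPath G Vint ℛ) ∧
        ℛ.card = ℓ + 1 ∧ Odd ((ℛ ∩ ℒ).card)} =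
        ↑(𝒵.filter (fun Z => Z.card - 1 = ℓ)) := by
      ext Z
      simp only [Set.mem_setOf_eq, Finset.coe_filter, h𝒵, Finset.mem_filter,
        Finset.mem_powerset, Set.mem_setOf_eq]
      constructor
      · rintro ⟨h1, h2, h3⟩
        exact ⟨⟨loop_or_ext_subset h1, h1, h3⟩, by omega⟩
      · rintro ⟨⟨hZE, h1, h3⟩, h2⟩
        have : Z.Nonempty := loop_or_ext_nonempty h1
        have hc : 1 ≤ Z.card := Finset.card_pos.mpr this
        exact ⟨h1, by omega, h3⟩
    rw [hsetEq, Set.ncard_coe_finset]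
    have hcongr : ∀ Z ∈ 𝒵.filter (fun Z => Z.card - 1 = ℓ),
        ((Z.card.choose (k Z) : ℝ) * p ^ (k Z)) =
        (((ℓ + 1).choose ((ℓ + 2) / 2) : ℕ) : ℝ) * p ^ ((ℓ + 2) / 2) := by
      intro Z hZ
      rw [Finset.mem_filter] at hZ
      have h1 : Z.Nonempty := by
        rw [h𝒵, Finset.mem_filter] at hZ
        exact loop_or_ext_nonempty hZ.1.2.1
      have hc : 1 ≤ Z.card := Finset.card_pos.mpr h1
      have hZc : Z.card = ℓ + 1 := by omega
      have hkZ : k Z = (ℓ + 2) / 2 := by rw [hk]; simp only [hZc]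
      rw [hZc, hkZ]
    rw [Finset.sum_congr rfl hcongr, Finset.sum_const, nsmul_eq_mul]
    ring
  -- res as a finite sum
  have hres : res G Vint ℒ p = ∑ ℓ ∈ Finset.range N,
      (((ℓ + 1).choose ((ℓ + 2) / 2) : ℕ) : ℝ) *
        (Set.ncard {ℛ : Finset (Sym2 V) |
          (IsSimpleClosedLoop G ℛ ∨ IsExtPath G Vint ℛ) ∧
          ℛ.card = ℓ + 1 ∧ Odd ((ℛ ∩ ℒ).card)} : ℝ) *
        p ^ ((ℓ + 2) / 2) := by
    rw [res]
    refine tsum_eq_sum (fun ℓ hℓ => ?_)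
    rw [Finset.mem_range, not_lt] at hℓ
    have : {ℛ : Finset (Sym2 V) |
        (IsSimpleClosedLoop G ℛ ∨ IsExtPath G Vint ℛ) ∧
        ℛ.card = ℓ + 1 ∧ Odd ((ℛ ∩ ℒ).card)} = ∅ := by
      ext Z
      simp only [Set.mem_setOf_eq, Set.mem_empty_iff_false, iff_false]
      rintro ⟨h1, h2, _⟩
      have := Finset.card_le_card (loop_or_ext_subset h1)
      omega
    rw [this]
    simp
  calc ∑ y ∈ bad, P y = ∑ y ∈ bad.filter (fun y => P y ≠ 0), P y := hstep1
    _ ≤ ∑ y ∈ B, P y := hstep2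
    _ ≤ ∑ Z ∈ 𝒵, ((Z.card.choose (k Z) : ℝ) * p ^ (k Z)) := hstep3
    _ = _ := hstep4
    _ = ∑ ℓ ∈ Finset.range N, (((ℓ + 1).choose ((ℓ + 2) / 2) : ℕ) : ℝ) *
        (Set.ncard {ℛ : Finset (Sym2 V) |
          (IsSimpleClosedLoop G ℛ ∨ IsExtPath G Vint ℛ) ∧
          ℛ.card = ℓ + 1 ∧ Odd ((ℛ ∩ ℒ).card)} : ℝ) *
        p ^ ((ℓ + 2) / 2) := Finset.sum_congr rfl (fun ℓ _ => hfiber ℓ)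
    _ = res G Vint ℒ p := hres.symm
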